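/- Let S ⋈ G be a terminating ordered join and Z ⊆ S an upper set of the shape such that Γ₀(G_i) = 0 for all i ∈ Z. Then Γ₀(S ⋈ G) = Γ₀((S \ Z) ⋈ G), where (S \ Z) ⋈ G is the ordered join restricted to the complement of Z. -/

import Mathlib

universe u

/-- `Nimber` as in the older Mathlib: a type synonym of `Ordinal` (removed from current Mathlib). -/
def Nimber : Type (u + 1) := Ordinal.{u}

namespace Nimber
instance : Zero Nimber.{u} := ⟨(0 : Ordinal.{u})⟩
end Nimber

namespace SetTheory

/-- Pre-games, as in the older Mathlib (removed from current Mathlib). -/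
inductive PGame : Type (u + 1)
  | mk : ∀ α β : Type u, (α → PGame) → (β → PGame) → PGame

namespace PGame

def LeftMoves : PGame.{u} → Type u
  | mk l _ _ _ => l

def RightMoves : PGame.{u} → Type u
  | mk _ r _ _ => r

def moveLeft : ∀ g : PGame.{u}, LeftMoves g → PGame.{u}
  | mk _ _ L _ => L

def moveRight : ∀ g : PGame.{u}, RightMoves g → PGame.{u}
  | mk _ _ _ R => R

instance : Zero PGame.{u} := ⟨⟨PEmpty, PEmpty, PEmpty.elim, PEmpty.elim⟩⟩

def neg : PGame.{u} → PGame.{u}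
  | mk l r L R => mk r l (fun i => neg (R i)) fun i => neg (L i)

instance : Neg PGame.{u} := ⟨neg⟩

/-- The pair `(x ≤ y, x ⧏ y)`, by the classical simultaneous recursion. -/
noncomputable def leLF (x : PGame.{u}) : PGame.{u} → Prop × Prop :=
  PGame.rec (motive := fun _ => PGame.{u} → Prop × Prop)
    (fun _ _ _ _ ihL ihR y =>
      PGame.rec (motive := fun _ => Prop × Prop)
        (fun yl yr yL yR jhL jhR =>
          ((∀ i, (ihL i (mk yl yr yL yR)).2) ∧ (∀ j, (jhR j).2),
           (∃ j, (jhL j).1) ∨ (∃ i, (ihR i (mk yl yr yL yR)).1))) y) x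

instance : LE PGame.{u} := ⟨fun x y => (leLF x y).1⟩

instance : HasEquiv PGame.{u} := ⟨fun x y => x ≤ y ∧ y ≤ x⟩

noncomputable def ImpartialAux (G : PGame.{u}) : Prop :=
  PGame.rec (motive := fun _ => Prop)
    (fun l r L R ihL ihR => (mk l r L R ≈ -mk l r L R) ∧ (∀ i, ihL i) ∧ ∀ j, ihR j) G

/-- Impartial pre-games, as in the older Mathlib. -/
class Impartial (G : PGame.{u}) : Prop where
  out : ImpartialAux G

/-- The Grundy value, as in the older Mathlib: the least nimber not among the Grundy values
of the left options. -/
noncomputable def grundyValue (G : PGame.{u}) : Nimber.{u} :=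
  PGame.rec (motive := fun _ => Nimber.{u})
    (fun _ _ _ _ ihL _ => (sInf ((Set.range ihL)ᶜ : Set Ordinal.{u}) : Ordinal.{u})) G

end PGame

end SetTheory

open SetTheory PGame Nimber

noncomputable section
open Classical in
/-- The state resulting from a (Left) move in component `i₀` of an ordered join:
all components strictly above `i₀` are replaced by the empty game `0`. -/
def ojNextL {S : Type} [PartialOrder S] (x : S → PGame) (i₀ : S) (j : (x i₀).LeftMoves) :
    S → PGame :=
  fun i => if i = i₀ then (x i₀).moveLeft j else if i₀ < i then 0 else x i

open Classical in
def ojNextR {S : Type} [PartialOrder S] (x : S → PGame) (i₀ : S) (j : (x i₀).RightMoves) :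
    S → PGame :=
  fun i => if i = i₀ then (x i₀).moveRight j else if i₀ < i then 0 else x i

/-- The move relation of the ordered join: `OJRel y x` iff `y` results from `x` by a single move. -/
def OJRel {S : Type} [PartialOrder S] (y x : S → PGame) : Prop :=
  (∃ i₀ j, y = ojNextL x i₀ j) ∨ (∃ i₀ j, y = ojNextR x i₀ j)

theorem ojrel_L {S : Type} [PartialOrder S] (x : S → PGame) (i₀ : S) (j : (x i₀).LeftMoves) :
    OJRel (ojNextL x i₀ j) x := Or.inl ⟨i₀, j, rfl⟩

theorem ojrel_R {S : Type} [PartialOrder S] (x : S → PGame) (i₀ : S) (j : (x i₀).RightMoves) :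
    OJRel (ojNextR x i₀ j) x := Or.inr ⟨i₀, j, rfl⟩

/-- The ordered join of a family of games, as a game, given a termination certificate. -/
def ojoinAcc {S : Type} [PartialOrder S] : ∀ x : S → PGame, Acc OJRel x → PGame := fun x h =>
  Acc.rec (motive := fun x _ => PGame)
    (fun x _ ih =>
      PGame.mk (Σ i₀ : S, (x i₀).LeftMoves) (Σ i₀ : S, (x i₀).RightMoves)
        (fun p => ih _ (ojrel_L x p.1 p.2))
        (fun p => ih _ (ojrel_R x p.1 p.2))) h

open Classical in
/-- The ordered join `S ⋈ G` of a family of games `G` over the poset `S`.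
(Defined as `0` in the degenerate non-terminating case.) -/
def ojoin {S : Type} [PartialOrder S] (x : S → PGame) : PGame :=
  if h : Acc OJRel x then ojoinAcc x h else 0

/-- The Grundy set `Γ₁(G)`: the set of Grundy numbers of the options of `G`. -/
def grundySet (G : PGame) : Set Nimber :=
  Set.range fun i => grundyValue (G.moveLeft i)
end


namespace Nimber
noncomputable instance : LinearOrder Nimber.{u} := inferInstanceAs (LinearOrder Ordinal.{u})

theorem pos_iff_ne_zero {a : Nimber.{u}} : (0 : Nimber.{u}) < a ↔ a ≠ 0 := by
  show (0 : Ordinal.{u}) < (a : Ordinal.{u}) ↔ (a : Ordinal.{u}) ≠ 0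
  exact ⟨ne_of_gt, fun h => lt_of_le_of_ne zero_le (Ne.symm h)⟩
end Nimber

namespace SetTheory
namespace PGame

@[simp] theorem moveLeft_mk {xl xr : Type u} {xL : xl → PGame.{u}} {xR : xr → PGame.{u}} :
    (PGame.mk xl xr xL xR).moveLeft = xL := rfl

theorem mex_mem {ι : Type u} (f : ι → Ordinal.{u}) : sInf (Set.range f)ᶜ ∈ (Set.range f)ᶜ :=
  csInf_mem (Ordinal.nonempty_compl_range.{u, u} f)

theorem grundyValue_zero : grundyValue (0 : PGame.{u}) = 0 := by
  show (sInf (Set.range fun i : PEmpty.{u + 1} => (grundyValue (PEmpty.elim i) : Ordinal.{u}))ᶜ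
    : Ordinal.{u}) = 0
  exact le_antisymm (csInf_le' (by rintro ⟨i, _⟩; exact i.elim)) zero_le

theorem grundyValue_ne_moveLeft {G : PGame.{u}} (i : G.LeftMoves) :
    grundyValue (G.moveLeft i) ≠ grundyValue G := by
  cases G with
  | mk l r L R =>
    intro h
    exact mex_mem (fun i => (grundyValue (L i) : Ordinal.{u})) ⟨i, h⟩

theorem exists_grundyValue_moveLeft_of_lt {G : PGame.{u}} {o : Nimber.{u}}
    (h : o < grundyValue G) : ∃ i, grundyValue (G.moveLeft i) = o := by
  cases G with
  | mk l r L R =>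
    by_contra hne
    push_neg at hne
    have hm : (o : Ordinal.{u}) ∈ (Set.range fun i => (grundyValue (L i) : Ordinal.{u}))ᶜ := by
      rintro ⟨i, hi⟩; exact hne i hi
    exact (not_lt.2 (csInf_le' (α := Ordinal.{u}) hm)) h

theorem grundyValue_le_of_forall_moveLeft {G : PGame.{u}} {o : Nimber.{u}}
    (h : ∀ i, grundyValue (G.moveLeft i) ≠ o) : grundyValue G ≤ o := by
  cases G with
  | mk l r L R =>
    have hm : (o : Ordinal.{u}) ∈ (Set.range fun i => (grundyValue (L i) : Ordinal.{u}))ᶜ := by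
      rintro ⟨i, hi⟩; exact h i hi
    exact csInf_le' (α := Ordinal.{u}) hm

theorem le_grundyValue_of_Iio_subset_moveLeft {G : PGame.{u}} {o : Nimber.{u}}
    (h : Set.Iio o ⊆ Set.range fun i => grundyValue (G.moveLeft i)) : o ≤ grundyValue G := by
  by_contra hlt
  have hl : grundyValue G < o := lt_of_not_ge hlt
  obtain ⟨i, hi⟩ := h hl
  exact grundyValue_ne_moveLeft i hi

end PGame
end SetTheory

section Aux
variable {S : Type} [PartialOrder S]

/-- Restriction of a family to the complement of `Z`. -/
def ojRes (Z : Set S) (x : S → PGame) : ↥Zᶜ → PGame := fun i => x ↑i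

lemma ojoin_of_acc (x : S → PGame) (h : Acc OJRel x) : ojoin x = ojoinAcc x h := by
  rw [ojoin, dif_pos h]

lemma ojoin_eq (x : S → PGame) (h : Acc OJRel x) :
    ojoin x = PGame.mk (Σ i₀ : S, (x i₀).LeftMoves) (Σ i₀ : S, (x i₀).RightMoves)
      (fun p => ojoin (ojNextL x p.1 p.2)) (fun p => ojoin (ojNextR x p.1 p.2)) := by
  obtain ⟨_, hx⟩ := h
  rw [ojoin_of_acc x (Acc.intro x hx)]
  show PGame.mk (Σ i₀ : S, (x i₀).LeftMoves) (Σ i₀ : S, (x i₀).RightMoves)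
      (fun p => ojoinAcc (ojNextL x p.1 p.2) (hx _ (ojrel_L x p.1 p.2)))
      (fun p => ojoinAcc (ojNextR x p.1 p.2) (hx _ (ojrel_R x p.1 p.2))) = _
  congr 1
  · funext p; rw [ojoin_of_acc _ (hx _ (ojrel_L x p.1 p.2))]
  · funext p; rw [ojoin_of_acc _ (hx _ (ojrel_R x p.1 p.2))]

lemma res_nextL {Z : Set S} (x : S → PGame) (i₀ : ↥Zᶜ) (j : (x ↑i₀).LeftMoves) :
    ojRes Z (ojNextL x ↑i₀ j) = ojNextL (ojRes Z x) i₀ j := by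
  funext i
  simp only [ojRes, ojNextL]
  by_cases h1 : i = i₀
  · simp [h1]
  · have h1' : (i : S) ≠ (i₀ : S) := fun h => h1 (Subtype.ext h)
    rw [if_neg h1', if_neg h1]
    by_cases h2 : i₀ < i
    · rw [if_pos (Subtype.coe_lt_coe.2 h2), if_pos h2]
    · rw [if_neg (fun h => h2 (Subtype.coe_lt_coe.1 h)), if_neg h2]

lemma res_nextR {Z : Set S} (x : S → PGame) (i₀ : ↥Zᶜ) (j : (x ↑i₀).RightMoves) :
    ojRes Z (ojNextR x ↑i₀ j) = ojNextR (ojRes Z x) i₀ j := by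
  funext i
  simp only [ojRes, ojNextR]
  by_cases h1 : i = i₀
  · simp [h1]
  · have h1' : (i : S) ≠ (i₀ : S) := fun h => h1 (Subtype.ext h)
    rw [if_neg h1', if_neg h1]
    by_cases h2 : i₀ < i
    · rw [if_pos (Subtype.coe_lt_coe.2 h2), if_pos h2]
    · rw [if_neg (fun h => h2 (Subtype.coe_lt_coe.1 h)), if_neg h2]

lemma acc_res {Z : Set S} {x : S → PGame} (h : Acc OJRel x) : Acc OJRel (ojRes Z x) := by
  induction h with
  | intro x hx ih =>
    constructor
    rintro y (⟨i₀, j, rfl⟩ | ⟨i₀, j, rfl⟩)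
    · rw [← res_nextL (Z := Z) x i₀ j]; exact ih _ (ojrel_L x ↑i₀ j)
    · rw [← res_nextR (Z := Z) x i₀ j]; exact ih _ (ojrel_R x ↑i₀ j)

lemma moveLeft_cast {A B : PGame} (h : A = B) (j : B.LeftMoves) :
    A.moveLeft (cast (congrArg PGame.LeftMoves h.symm) j) = B.moveLeft j := by
  subst h; rfl

lemma grundy_ne_opt {T : Type} [PartialOrder T] (w : T → PGame) (hw : Acc OJRel w)
    (i₀ : T) (j : (w i₀).LeftMoves) :
    grundyValue (ojoin (ojNextL w i₀ j)) ≠ grundyValue (ojoin w) := by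
  have h := grundyValue_ne_moveLeft (G := PGame.mk (Σ i : T, (w i).LeftMoves)
      (Σ i : T, (w i).RightMoves) (fun p => ojoin (ojNextL w p.1 p.2))
      (fun p => ojoin (ojNextR w p.1 p.2))) ⟨i₀, j⟩
  simp only [PGame.moveLeft_mk] at h
  rw [← ojoin_eq w hw] at h
  exact h

lemma main_aux {Z : Set S} (hZ : IsUpperSet Z) :
    ∀ x : S → PGame, Acc (Relation.TransGen OJRel) x → (∀ i ∈ Z, grundyValue (x i) = 0) →
      grundyValue (ojoin x) = grundyValue (ojoin (ojRes Z x)) := by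
  intro x hacc
  induction hacc with
  | intro x hacc ih =>
    intro h0
    have hxr : Acc OJRel x :=
      Subrelation.accessible (fun h => Relation.TransGen.single h) (Acc.intro x hacc)
    set v := grundyValue (ojoin (ojRes Z x)) with hv
    -- the step for moves outside Z
    have step : ∀ (i₀ : S) (hi₀ : i₀ ∉ Z), ∀ j : (x i₀).LeftMoves,
        grundyValue (ojoin (ojNextL x i₀ j)) =
        grundyValue (ojoin (ojNextL (ojRes Z x) (⟨i₀, hi₀⟩ : ↥Zᶜ) j)) := by
      intro i₀ hi₀ j
      have h0' : ∀ i ∈ Z, grundyValue (ojNextL x i₀ j i) = 0 := by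
        intro i hi
        have hne : i ≠ i₀ := fun h => hi₀ (h ▸ hi)
        simp only [ojNextL, if_neg hne]
        by_cases h2 : i₀ < i
        · rw [if_pos h2]; exact grundyValue_zero
        · rw [if_neg h2]; exact h0 i hi
      rw [ih _ (Relation.TransGen.single (ojrel_L x i₀ j)) h0',
        res_nextL x (⟨i₀, hi₀⟩ : ↥Zᶜ) j]
    apply le_antisymm
    · -- each left option of the full join has value ≠ v
      rw [ojoin_eq x hxr]
      apply grundyValue_le_of_forall_moveLeft
      rintro ⟨i₀, j⟩
      show grundyValue (ojoin (ojNextL x i₀ j)) ≠ v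
      by_cases hi₀ : i₀ ∈ Z
      · -- move inside Z : respond to a position of value 0 in that component
        set y := ojNextL x i₀ j with hy
        have hyacc : Acc OJRel y := hxr.inv (ojrel_L x i₀ j)
        have hyi : y i₀ = (x i₀).moveLeft j := by simp [hy, ojNextL]
        have hw : grundyValue (y i₀) ≠ 0 := by
          rw [hyi]
          intro h
          exact grundyValue_ne_moveLeft j (h.trans (h0 i₀ hi₀).symm)
        have hw' : (0 : Nimber) < grundyValue (y i₀) := Nimber.pos_iff_ne_zero.2 hw
        obtain ⟨j', hj'⟩ := exists_grundyValue_moveLeft_of_lt hw'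
        set y' := ojNextL y i₀ j' with hy'
        have h0'' : ∀ i ∈ Z, grundyValue (y' i) = 0 := by
          intro i hi
          simp only [hy', ojNextL]
          by_cases h1 : i = i₀
          · subst h1; rw [if_pos rfl]; exact hj'
          · rw [if_neg h1]
            by_cases h2 : i₀ < i
            · rw [if_pos h2]; exact grundyValue_zero
            · rw [if_neg h2]
              simp only [hy, ojNextL, if_neg h1, if_neg h2]
              exact h0 i hi
        have hres : ojRes Z y' = ojRes Z x := by
          funext i
          have hne : (i : S) ≠ i₀ := fun h => i.2 (h ▸ hi₀)
          have hnlt : ¬ i₀ < (i : S) := fun h => i.2 (hZ h.le hi₀)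
          simp only [ojRes, hy', hy, ojNextL, if_neg hne, if_neg hnlt]
        have htg : Relation.TransGen OJRel y' x :=
          Relation.TransGen.head (ojrel_L y i₀ j')
            (Relation.TransGen.single (ojrel_L x i₀ j))
        have hval : grundyValue (ojoin y') = v := by
          rw [ih _ htg h0'', hres]
        exact fun hcon => grundy_ne_opt y hyacc i₀ j' (hval.trans hcon.symm)
      · -- move outside Z : it matches an option of the restricted join
        rw [step i₀ hi₀ j]
        exact grundy_ne_opt (ojRes Z x) (acc_res hxr) ⟨i₀, hi₀⟩ j
    · -- every value below v is realized among left options of the full join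
      rw [ojoin_eq x hxr]
      apply le_grundyValue_of_Iio_subset_moveLeft
      intro u hu
      rw [hv, ojoin_eq (ojRes Z x) (acc_res hxr)] at hu
      obtain ⟨⟨i₀, j⟩, hj⟩ := exists_grundyValue_moveLeft_of_lt hu
      refine ⟨⟨↑i₀, j⟩, ?_⟩
      show grundyValue (ojoin (ojNextL x ↑i₀ j)) = u
      rw [step ↑i₀ i₀.2 j]
      exact hj

end Aux

/-- zero upper sets: if `Z ⊆ S` is an upper set with `Γ₀(G i) = 0` for all
`i ∈ Z`, then `Γ₀(S ⋈ G) = Γ₀((S \ Z) ⋈ G)`. -/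
theorem ojoin_zero_upper_set {S : Type} [PartialOrder S] (G : S → PGame)
    (hI : ∀ i, (G i).Impartial) (hG : Acc OJRel G)
    (Z : Set S) (hZ : IsUpperSet Z) (h0 : ∀ i ∈ Z, grundyValue (G i) = 0) :
    grundyValue (ojoin G) = grundyValue (ojoin fun i : ↥Zᶜ => G i) := by
  exact main_aux hZ G hG.transGen h0
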